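/- Let C be a field of characteristic zero, m, n ≥ 1, and let g_1, ..., g_n be elements of a power series ring over C̄. Suppose B ∈ C[y]^{k×m} is a matrix of polynomials and A_ℓ is a matrix such that the square matrix C_ℓ with block columns (A_ℓ(x,g_i) over B(g_i)) for i = 1..n is defined. If for every polynomial p ∈ C[y] and every i ≠ j the element g_i − g_j divides p(g_i) − p(g_j), then det C_ℓ is divisible by ∏_{i<j} (g_i − g_j)^m, where m is the number of columns in each block whose entries are polynomials in g_i. -/

import Mathlib

open MvPolynomial

private def stmt10_optNe {n : ℕ} (i : Fin n) : Option {k : Fin n // k ≠ i} ≃ Fin n where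
  toFun o := o.elim i Subtype.val
  invFun k := if h : k = i then none else some ⟨k, h⟩
  left_inv o := by
    cases o with
    | none => simp
    | some k => simp [k.2]
  right_inv k := by
    by_cases h : k = i <;> simp [h]

private lemma stmt10_prime_X_sub_X {R : Type*} [CommRing R] [IsDomain R] {n : ℕ}
    {i j : Fin n} (hij : j ≠ i) :
    Prime (X i - X j : MvPolynomial (Fin n) R) := by
  classical
  let e := (renameEquiv R (stmt10_optNe i).symm).trans
    (optionEquivLeft R {k : Fin n // k ≠ i})
  rw [← MulEquiv.prime_iff (e.toRingEquiv.toMulEquiv)]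
  have hi : (stmt10_optNe i).symm i = none := by
    simp [stmt10_optNe, Equiv.symm]
  have hj : (stmt10_optNe i).symm j = some ⟨j, hij⟩ := by
    simp [stmt10_optNe, Equiv.symm, hij]
  have : e.toRingEquiv.toMulEquiv (X i - X j)
      = Polynomial.X - Polynomial.C (X (⟨j, hij⟩ : {k : Fin n // k ≠ i})) := by
    show e (X i - X j) = _
    simp only [e, map_sub, AlgEquiv.trans_apply, renameEquiv_apply, rename_X, hi, hj,
      optionEquivLeft_X_none, optionEquivLeft_X_some]
  rw [this]
  exact Polynomial.prime_X_sub_C _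

private lemma stmt10_not_dvd {R : Type*} [CommRing R] [IsDomain R] {n : ℕ}
    {i j k l : Fin n} (hij : i < j) (hkl : k < l) (hne : (k, l) ≠ (i, j)) :
    ¬ ((X k - X l : MvPolynomial (Fin n) R) ∣ X i - X j) := by
  classical
  intro h
  set σ : Fin n → Fin n := fun t => if t = k then l else t with hσ
  have h2 : (rename σ) (X k - X l : MvPolynomial (Fin n) R) ∣ (rename σ) (X i - X j) :=
    map_dvd _ h
  have hk : σ k = l := by simp [hσ]
  have hzero : (rename σ) (X k - X l : MvPolynomial (Fin n) R) = 0 := by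
    simp [map_sub, rename_X, hk, hσ]
  rw [hzero, zero_dvd_iff, map_sub, rename_X, rename_X, sub_eq_zero] at h2
  have hσij : σ i ≠ σ j := by
    by_cases hi : i = k
    · subst hi
      have hjk : j ≠ i := hij.ne'
      have : σ j = j := by simp [hσ, hjk]
      rw [hk, this]
      intro hlj
      exact hne (by rw [Prod.mk.injEq]; exact ⟨rfl, hlj⟩)
    · have h1 : σ i = i := by simp [hσ, hi]
      by_cases hj : j = k
      · subst hj
        rw [h1, hk]
        exact fun hil => absurd (hil ▸ hij) (not_lt.mpr hkl.le)
      · have h2' : σ j = j := by simp [hσ, hj]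
        rw [h1, h2']
        exact hij.ne
  exact hσij (X_injective h2)

private lemma stmt10_prod_pow_dvd {R : Type*} [CommRing R] [IsDomain R] {ι : Type*}
    [DecidableEq ι] (s : Finset ι) (p : ι → R) (m : ℕ) (d : R)
    (hp : ∀ a ∈ s, Prime (p a))
    (hnd : ∀ a ∈ s, ∀ b ∈ s, a ≠ b → ¬ p a ∣ p b)
    (hd : ∀ a ∈ s, p a ^ m ∣ d) : (∏ a ∈ s, p a ^ m) ∣ d := by
  induction s using Finset.cons_induction with
  | empty => simp
  | cons a s ha ih =>
    have hmem : ∀ b ∈ s, b ∈ Finset.cons a s ha := fun b hb => Finset.mem_cons_of_mem hb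
    obtain ⟨e, he⟩ := ih (fun b hb => hp b (hmem b hb))
      (fun b hb c hc => hnd b (hmem b hb) c (hmem c hc))
      (fun b hb => hd b (hmem b hb))
    have hpa : Prime (p a) := hp a (Finset.mem_cons_self a s)
    have hnda : ¬ p a ∣ ∏ b ∈ s, p b ^ m := by
      intro h
      obtain ⟨b, hb, hdvd⟩ := hpa.exists_mem_finset_dvd h
      exact hnd a (Finset.mem_cons_self a s) b (hmem b hb)
        (fun hab => ha (hab ▸ hb)) (hpa.dvd_of_dvd_pow hdvd)
    have h1 : p a ^ m ∣ (∏ b ∈ s, p b ^ m) * e := he ▸ hd a (Finset.mem_cons_self a s)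
    obtain ⟨f, hf⟩ := hpa.pow_dvd_of_dvd_mul_left m hnda h1
    refine ⟨f, ?_⟩
    rw [Finset.prod_cons, he, hf]
    ring

/-- Divisibility lemma (Lemma 4 of the paper): let `g₁,…,g_n` be elements of a
power series ring over an algebraically closed field of characteristic zero,
and let `M` be a square block matrix whose block of `m` columns indexed by `i`
has entries obtained by evaluating fixed polynomials at `g_i` (the blocks
`(A_ℓ(x,g_i)` over `B(g_i))`, with the `x`-dependence absorbed in the power
series coefficients). If `g_i - g_j` divides `p(g_i) - p(g_j)` for every
polynomial `p` and all `i ≠ j`, then `det M` is divisible by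
`∏_{i<j} (g_i - g_j)^m`. -/
theorem stmt10 {K : Type*} [Field K] [CharZero K] [IsAlgClosed K]
    (n m : ℕ) (hn : 1 ≤ n) (hm : 1 ≤ m)
    (g : Fin n → PowerSeries K)
    (E : (Fin n × Fin m) → Fin m → Polynomial (PowerSeries K))
    (M : Matrix (Fin n × Fin m) (Fin n × Fin m) (PowerSeries K))
    (hM : ∀ p j, M p j = Polynomial.eval (g j.1) (E p j.2))
    (hdiv : ∀ (p : Polynomial (PowerSeries K)) (i j : Fin n), i ≠ j →
      (g i - g j) ∣ (Polynomial.eval (g i) p - Polynomial.eval (g j) p)) :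
    (∏ q ∈ Finset.univ.filter (fun q : Fin n × Fin n => q.1 < q.2),
        (g q.1 - g q.2) ^ m) ∣ M.det := by
  classical
  set N : Matrix (Fin n × Fin m) (Fin n × Fin m) (MvPolynomial (Fin n) (PowerSeries K)) :=
    fun p q => Polynomial.eval₂ MvPolynomial.C (MvPolynomial.X q.1) (E p q.2) with hN
  have hMN : M = N.map (MvPolynomial.eval g) := by
    funext p q
    rw [hM p q, Matrix.map_apply]
    show _ = MvPolynomial.eval g (Polynomial.eval₂ MvPolynomial.C (MvPolynomial.X q.1) (E p q.2))
    rw [Polynomial.hom_eval₂]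
    have h1 : (MvPolynomial.eval g).comp (MvPolynomial.C) = RingHom.id (PowerSeries K) :=
      RingHom.ext fun r => MvPolynomial.eval_C r
    rw [h1, MvPolynomial.eval_X]
    rfl
  have hdet : M.det = MvPolynomial.eval g N.det := by
    rw [hMN]; exact (RingHom.map_det (MvPolynomial.eval g) N).symm
  -- per-pair divisibility
  have key : ∀ i j : Fin n, i < j →
      (MvPolynomial.X i - MvPolynomial.X j :
        MvPolynomial (Fin n) (PowerSeries K)) ^ m ∣ N.det := by
    intro i j hij
    set t : MvPolynomial (Fin n) (PowerSeries K) :=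
      MvPolynomial.X i - MvPolynomial.X j with ht
    have hD : ∀ (p : Fin n × Fin m) (c : Fin m), ∃ d, N p (i, c) = N p (j, c) + t * d := by
      intro p c
      have hdv : t ∣ N p (i, c) - N p (j, c) := by
        show t ∣ Polynomial.eval₂ MvPolynomial.C (MvPolynomial.X i) (E p c)
          - Polynomial.eval₂ MvPolynomial.C (MvPolynomial.X j) (E p c)
        rw [← Polynomial.eval_map, ← Polynomial.eval_map]
        exact Polynomial.sub_dvd_eval_sub _ _ _
      obtain ⟨d, hd⟩ := hdv
      exact ⟨d, by rw [← hd]; ring⟩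
    choose D hD using hD
    set F : Finset (Fin m) → Matrix (Fin n × Fin m) (Fin n × Fin m)
        (MvPolynomial (Fin n) (PowerSeries K)) :=
      fun s p q => if q.1 = i ∧ q.2 ∈ s then D p q.2 else N p q with hF
    have main : ∀ s : Finset (Fin m), N.det = t ^ s.card * (F s).det := by
      intro s
      induction s using Finset.induction_on with
      | empty =>
        have h0 : F ∅ = N := by funext p q; simp [hF]
        rw [h0]; simp
      | @insert c s hc ih =>
        have hcol : F s = (F s).updateCol (i, c)
            (fun p => N p (j, c) + t * D p c) := by
          funext p q
          rw [Matrix.updateCol_apply]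
          by_cases h : q = (i, c)
          · subst h
            simp only [if_pos rfl]
            have : F s p (i, c) = N p (i, c) := by simp [hF, hc]
            rw [this]; exact hD p c
          · rw [if_neg h]
        have hsplit : (fun p => N p (j, c) + t * D p c)
            = (fun p => N p (j, c)) + t • (fun p => D p c) := by
          funext p; simp [smul_eq_mul]
        have hzero : ((F s).updateCol (i, c) (fun p => N p (j, c))).det = 0 := by
          apply Matrix.det_zero_of_column_eq
            (show ((i, c) : Fin n × Fin m) ≠ (j, c) by
              simp [Prod.ext_iff, hij.ne])
          intro p
          rw [Matrix.updateCol_apply, Matrix.updateCol_apply,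
            if_pos rfl, if_neg (show ((j, c) : Fin n × Fin m) ≠ (i, c) by
              simp [Prod.ext_iff, hij.ne'])]
          simp [hF, hij.ne']
        have hins : (F s).updateCol (i, c) (fun p => D p c) = F (insert c s) := by
          funext p q
          rw [Matrix.updateCol_apply]
          by_cases h : q = (i, c)
          · subst h
            simp [hF]
          · rw [if_neg h]
            simp only [hF, Finset.mem_insert]
            by_cases h1 : q.1 = i
            · by_cases h2 : q.2 ∈ s
              · simp [h1, h2]
              · have h3 : q.2 ≠ c := by
                  intro hc2
                  exact h (Prod.ext h1 hc2)
                simp [h1, h2, h3]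
            · simp [h1]
        have hstep : (F s).det = t * (F (insert c s)).det := by
          conv_lhs => rw [hcol, hsplit]
          rw [Matrix.det_updateCol_add, Matrix.det_updateCol_smul, hzero, hins,
            zero_add]
        rw [ih, hstep, Finset.card_insert_of_notMem hc, pow_succ]
        ring
    refine ⟨(F Finset.univ).det, ?_⟩
    have := main Finset.univ
    rwa [Finset.card_univ, Fintype.card_fin] at this
  have hdvdN : (∏ q ∈ Finset.univ.filter (fun q : Fin n × Fin n => q.1 < q.2),
      (MvPolynomial.X q.1 - MvPolynomial.X q.2 :
        MvPolynomial (Fin n) (PowerSeries K)) ^ m) ∣ N.det := by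
    apply stmt10_prod_pow_dvd
    · intro a ha
      rw [Finset.mem_filter] at ha
      exact stmt10_prime_X_sub_X ha.2.ne'
    · intro a ha b hb hab
      rw [Finset.mem_filter] at ha hb
      exact stmt10_not_dvd hb.2 ha.2 (by simpa using hab)
    · intro a ha
      rw [Finset.mem_filter] at ha
      exact key a.1 a.2 ha.2
  rw [hdet]
  have hm2 := map_dvd (MvPolynomial.eval g) hdvdN
  rw [map_prod] at hm2
  simpa [map_sub, map_pow, MvPolynomial.eval_X] using hm2
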